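/- If G is a graph of girth g ∈ {5, 6} and minimum degree δ ≥ 2, then Z(G) ≥ (g − 2)(δ − 2) + 2. -/

import Mathlib

namespace SimpleGraph

variable {V : Type*}

/-- `G.ZeroForces Z v` : vertex `v` is eventually colored when starting from `Z`
and iteratively adding any vertex that is the unique uncolored neighbor of a colored vertex. -/
inductive ZeroForces (G : SimpleGraph V) (Z : Set V) : V → Prop
  | base {v : V} : v ∈ Z → ZeroForces G Z v
  | force {v u : V} : ZeroForces G Z v → G.Adj v u →
      (∀ w, G.Adj v w → w ≠ u → ZeroForces G Z w) → ZeroForces G Z u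

/-- The forcing closure `F(Z)`. -/
def zfClosure (G : SimpleGraph V) (Z : Set V) : Set V := {v | G.ZeroForces Z v}

/-- `Z` is a zero forcing set of `G`. -/
def IsZeroForcingSet (G : SimpleGraph V) (Z : Set V) : Prop := ∀ v, G.ZeroForces Z v

/-- The zero forcing number `Z(G)`. -/
noncomputable def zeroForcingNumber (G : SimpleGraph V) [Fintype V] : ℕ :=
  sInf {k | ∃ Z : Finset V, Z.card = k ∧ G.IsZeroForcingSet ↑Z}

end SimpleGraph
namespace ZFAux
open SimpleGraph Finset
set_option linter.unusedSectionVars false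

variable {V : Type*} {G : SimpleGraph V}





lemma escape {Z A : Set V} {v : V} (hv : G.ZeroForces Z v) :
    v ∉ Z ∪ A → ∃ u w, G.Adj u w ∧ w ∉ Z ∪ A ∧ u ∈ Z ∪ A ∧
      ∀ x, G.Adj u x → x ≠ w → x ∈ Z ∪ A := by
  induction hv with
  | base h => exact fun hvA => absurd (Or.inl h) hvA
  | @force v u hu hadj hall ihu ihall =>
    intro hvA
    by_cases hcu : v ∈ Z ∪ A
    · by_cases hcx : ∀ x, G.Adj v x → x ≠ u → x ∈ Z ∪ A
      · exact ⟨v, u, hadj, hvA, hcu, hcx⟩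
      · push_neg at hcx
        obtain ⟨x, hx1, hx2, hx3⟩ := hcx
        exact ihall x hx1 hx2 hx3
    · exact ihu hcu

-- girth tools
lemma noC3 (h5 : 5 ≤ G.egirth) {a b c : V} (hab : G.Adj a b) (hbc : G.Adj b c)
    (hca : G.Adj c a) : False := by
  have hw : (Walk.cons hab (Walk.cons hbc (Walk.cons hca Walk.nil))).IsCycle := by
    simp [Walk.isCycle_def, Walk.isTrail_def, hab.ne, hbc.ne, hca.ne, hab.ne', hbc.ne', hca.ne']
  have := le_egirth.mp h5 a _ hw
  simp only [Walk.length_cons, Walk.length_nil] at this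
  norm_num at this

lemma noC4 (h5 : 5 ≤ G.egirth) {a b c d : V} (hac : a ≠ c) (hbd : b ≠ d)
    (hab : G.Adj a b) (hbc : G.Adj b c) (hcd : G.Adj c d) (hda : G.Adj d a) : False := by
  have hw : (Walk.cons hab (Walk.cons hbc (Walk.cons hcd (Walk.cons hda Walk.nil)))).IsCycle := by
    simp [Walk.isCycle_def, Walk.isTrail_def, hab.ne, hbc.ne, hcd.ne, hda.ne,
      hab.ne', hbc.ne', hcd.ne', hda.ne', hac, hbd, hac.symm, hbd.symm]
  have := le_egirth.mp h5 a _ hw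
  simp only [Walk.length_cons, Walk.length_nil] at this
  norm_num at this

lemma noC5 (h6 : 6 ≤ G.egirth) {a b c d e : V} (hac : a ≠ c) (had : a ≠ d) (hbd : b ≠ d)
    (hbe : b ≠ e) (hce : c ≠ e)
    (hab : G.Adj a b) (hbc : G.Adj b c) (hcd : G.Adj c d) (hde : G.Adj d e)
    (hea : G.Adj e a) : False := by
  have hw : (Walk.cons hab (Walk.cons hbc (Walk.cons hcd (Walk.cons hde
      (Walk.cons hea Walk.nil))))).IsCycle := by
    simp [Walk.isCycle_def, Walk.isTrail_def, hab.ne, hbc.ne, hcd.ne, hde.ne, hea.ne,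
      hab.ne', hbc.ne', hcd.ne', hde.ne', hea.ne', hac, hbd, hce, had, hbe,
      hac.symm, hbd.symm, hce.symm, had.symm, hbe.symm]
  have := le_egirth.mp h6 a _ hw
  simp only [Walk.length_cons, Walk.length_nil] at this
  norm_num at this

open SimpleGraph Finset

variable {V : Type*} {G : SimpleGraph V}


section
variable [Fintype V] [DecidableRel G.Adj] [DecidableEq V]

lemma card_common_le_one (h5 : 5 ≤ G.egirth) {x y : V} (hxy : x ≠ y) :
    ((G.neighborFinset x) ∩ (G.neighborFinset y)).card ≤ 1 := by
  refine Finset.card_le_one.mpr ?_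
  intro a ha b hb
  simp only [mem_inter, mem_neighborFinset] at ha hb
  by_contra hab
  exact noC4 h5 hxy hab ha.1 ha.2.symm hb.2 hb.1.symm

lemma moore (h5 : 5 ≤ G.egirth) {δ : ℕ} (hdeg : ∀ v, δ ≤ G.degree v) (u : V) :
    δ * δ + 1 ≤ Fintype.card V := by
  set S := G.neighborFinset u with hS
  set T := S.biUnion (fun x => G.neighborFinset x \ {u}) with hT
  have hdisjbi : ∀ x ∈ S, ∀ x' ∈ S, x ≠ x' →
      Disjoint (G.neighborFinset x \ {u}) (G.neighborFinset x' \ {u}) := by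
    intro x hx x' hx' hne
    rw [Finset.disjoint_left]
    intro y hy hy'
    simp only [mem_sdiff, mem_neighborFinset, mem_singleton] at hy hy'
    rw [hS, mem_neighborFinset] at hx hx'
    exact noC4 h5 (fun h => hy.2 h.symm) hne hx hy.1 hy'.1.symm hx'.symm
  have hTcard : δ * (δ - 1) ≤ T.card := by
    rw [hT, Finset.card_biUnion hdisjbi]
    have h1 : ∀ x ∈ S, δ - 1 ≤ (G.neighborFinset x \ {u}).card := by
      intro x hx
      have hu : u ∈ G.neighborFinset x := by
        rw [mem_neighborFinset]
        exact ((mem_neighborFinset _ _ _).mp hx).symm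
      rw [Finset.card_sdiff_of_subset (by simpa using hu), Finset.card_singleton]
      have := hdeg x
      rw [degree] at this
      omega
    calc δ * (δ - 1) ≤ S.card * (δ - 1) := by
          have : δ ≤ S.card := hdeg u
          exact Nat.mul_le_mul_right _ this
      _ ≤ ∑ x ∈ S, (G.neighborFinset x \ {u}).card := by
          rw [← Finset.sum_const_nat (m := δ - 1) (fun x hx => rfl)] at *
          exact Finset.sum_le_sum h1
  have huS : u ∉ S := by simp [hS]
  have huT : u ∉ T := by simp [hT]
  have hST : Disjoint S T := by
    rw [Finset.disjoint_left]
    intro y hyS hyT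
    simp only [hT, mem_biUnion, mem_sdiff, mem_neighborFinset, mem_singleton] at hyT
    obtain ⟨x, hx, hxy, hyu⟩ := hyT
    rw [hS, mem_neighborFinset] at hyS hx
    exact noC3 h5 hx hxy hyS.symm
  have htot : ({u} ∪ S ∪ T).card ≤ Fintype.card V := by
    simpa using Finset.card_le_univ ({u} ∪ S ∪ T)
  rw [Finset.card_union_of_disjoint, Finset.card_union_of_disjoint (by simpa using huS),
    Finset.card_singleton] at htot
  · have hScard : δ ≤ S.card := hdeg u
    have hmul : δ * (δ - 1) + δ = δ * δ := by
      cases δ with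
      | zero => simp
      | succ n => simp [Nat.succ_sub_one]; ring
    omega
  · rw [Finset.disjoint_union_left]
    exact ⟨by simpa using huT, hST⟩
end
def ok3 (a12 a13 a23 m12 m13 m23 : Bool) : Bool :=
  !(a12 && a13 && a23) && (!(a12 && m12) && (!(a13 && m13) && (!(a23 && m23) && (!(a12 && a13 && m23) && (!(a12 && a23 && m13) && (!(a13 && a23 && m12)))))))

lemma key3 : ∀ (a12 a13 a23 m12 m13 m23 : Bool),
    ok3 a12 a13 a23 m12 m13 m23 = true →
    (a12.toNat + (a23 && a13).toNat + m12.toNat + a12.toNat)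
    + (a13.toNat + a23.toNat + m13.toNat + m23.toNat + (a13 || a23).toNat) ≤ 4 := by decide

def ok4 (a12 a13 a14 a23 a24 a34 m12 m13 m14 m23 m24 m34 : Bool) : Bool :=
  !(a12 && a13 && a23) && (!(a12 && a14 && a24) && (!(a13 && a14 && a34) && (!(a23 && a24 && a34) && (!(a12 && m12) && (!(a13 && m13) && (!(a14 && m14) && (!(a23 && m23) && (!(a24 && m24) && (!(a34 && m34) && (!(a12 && a13 && m23) && (!(a12 && a23 && m13) && (!(a13 && a23 && m12) && (!(a12 && a14 && m24) && (!(a12 && a24 && m14) && (!(a14 && a24 && m12) && (!(a13 && a14 && m34) && (!(a13 && a34 && m14) && (!(a14 && a34 && m13) && (!(a23 && a24 && m34) && (!(a23 && a34 && m24) && (!(a24 && a34 && m23) && (!(a23 && m12 && m13) && (!(a13 && m12 && m23) && (!(a12 && m13 && m23) && (!(a24 && m12 && m14) && (!(a14 && m12 && m24) && (!(a12 && m14 && m24) && (!(a34 && m13 && m14) && (!(a14 && m13 && m34) && (!(a13 && m14 && m34) && (!(a34 && m23 && m24) && (!(a24 && m23 && m34) && (!(a23 && m24 && m34) && (!(a13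 && a23 && a24 && a14) && (!(a12 && a23 && a34 && a14) && (!(a12 && a24 && a34 && a13) && (!(a12 && a23 && a34 && m14) && (!(a12 && a24 && a34 && m13) && (!(a13 && a23 && a24 && m14) && (!(a13 && a34 && a24 && m12) && (!(a14 && a24 && a23 && m13) && (!(a14 && a34 && a23 && m12) && (!(a12 && a13 && a34 && m24) && (!(a12 && a14 && a34 && m23) && (!(a23 && a13 && a14 && m24) && (!(a24 && a14 && a13 && m23) && (!(a13 && a12 && a24 && m34) && (!(a23 && a12 && a14 && m34)))))))))))))))))))))))))))))))))))))))))))))))))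

lemma key4 : ∀ (a12 a13 a14 a23 a24 a34 m12 m13 m14 m23 m24 m34 : Bool),
    ok4 a12 a13 a14 a23 a24 a34 m12 m13 m14 m23 m24 m34 = true →
    (a12.toNat + (a23 && a13).toNat + (a24 && a14).toNat + m12.toNat + a12.toNat)
    + (a13.toNat + a23.toNat + (a34 && (a14 || a24)).toNat + m13.toNat + m23.toNat + (a13 || a23).toNat)
    + (a14.toNat + a24.toNat + a34.toNat + m14.toNat + m24.toNat + m34.toNat + (a14 || a24 || a34).toNat) ≤ 6 := by decide

open SimpleGraph Finset



section
variable [Fintype V] [DecidableRel G.Adj] [DecidableEq V]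

/-- common-neighborhood finset avoiding `U` -/
def ext (G : SimpleGraph V) [DecidableRel G.Adj] [Fintype V] [DecidableEq V]
    (U : Finset V) (x y : V) : Finset V :=
  (G.neighborFinset x ∩ G.neighborFinset y) \ U

lemma ext_mem {U : Finset V} {x y z : V} (hz : z ∈ ext G U x y) :
    G.Adj x z ∧ G.Adj y z ∧ z ∉ U := by
  simp only [ext, mem_sdiff, mem_inter, mem_neighborFinset] at hz
  exact ⟨hz.1.1, hz.1.2, hz.2⟩

omit [Fintype V] [DecidableRel G.Adj] [DecidableEq V] in
lemma noT1 (h5 : 5 ≤ G.egirth) {a b c : V} (hab : G.Adj a b) (hac : G.Adj a c)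
    (hbc : G.Adj b c) : False :=
  noC3 h5 hab hbc hac.symm

lemma noT4 (h5 : 5 ≤ G.egirth) {U : Finset V} {a b : V} (hab : G.Adj a b)
    (hm : (ext G U a b).Nonempty) : False := by
  obtain ⟨z, hz⟩ := hm
  obtain ⟨hza, hzb, _⟩ := ext_mem hz
  exact noC3 h5 hab hzb hza.symm

lemma noT2 (h5 : 5 ≤ G.egirth) {U : Finset V} {a b c : V} (hb : b ∈ U) (hac : a ≠ c)
    (hab : G.Adj a b) (hbc : G.Adj b c) (hm : (ext G U a c).Nonempty) : False := by
  obtain ⟨z, hz⟩ := hm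
  obtain ⟨hza, hzc, hzU⟩ := ext_mem hz
  exact noC4 h5 (fun h => hzU (by rw [h]; exact hb)) hac hza.symm hab hbc hzc

lemma noT3 (h6 : 6 ≤ G.egirth) {U : Finset V} {a b c : V} (ha : a ∈ U) (hb : b ∈ U)
    (hac : a ≠ c) (hbc : b ≠ c) (hab : G.Adj a b)
    (hm1 : (ext G U a c).Nonempty) (hm2 : (ext G U b c).Nonempty) : False := by
  have h5 : 5 ≤ G.egirth := le_trans (by norm_num) h6
  obtain ⟨z, hz⟩ := hm1
  obtain ⟨hza, hzc, hzU⟩ := ext_mem hz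
  obtain ⟨z', hz'⟩ := hm2
  obtain ⟨hz'b, hz'c, hz'U⟩ := ext_mem hz'
  by_cases hzz : z = z'
  · subst hzz
    exact noC3 h5 hab hz'b hza.symm
  · -- C5 : a b z' c z
    refine noC5 h6 (a := a) (b := b) (c := z') (d := c) (e := z)
      (fun h => hz'U (by rw [← h]; exact ha)) hac hbc
      (fun h => hzU (by rw [← h]; exact hb)) (Ne.symm hzz)
      hab hz'b hz'c.symm hzc hza.symm

omit [Fintype V] [DecidableRel G.Adj] [DecidableEq V] in
lemma noT5 (h5 : 5 ≤ G.egirth) {a b c d : V} (hac : a ≠ c) (hbd : b ≠ d)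
    (hab : G.Adj a b) (hbc : G.Adj b c) (hcd : G.Adj c d) (had : G.Adj a d) : False :=
  noC4 h5 hac hbd hab hbc hcd had.symm

lemma noT6 (h6 : 6 ≤ G.egirth) {U : Finset V} {a b c d : V} (hb : b ∈ U) (hc : c ∈ U)
    (hac : a ≠ c) (had : a ≠ d) (hbd : b ≠ d)
    (hab : G.Adj a b) (hbc : G.Adj b c) (hcd : G.Adj c d)
    (hm : (ext G U a d).Nonempty) : False := by
  obtain ⟨z, hz⟩ := hm
  obtain ⟨hza, hzd, hzU⟩ := ext_mem hz
  -- C5 : z a b c d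
  exact noC5 h6 (a := z) (b := a) (c := b) (d := c) (e := d)
    (fun h => hzU (by rw [h]; exact hb)) (fun h => hzU (by rw [h]; exact hc)) hac had hbd
    hza.symm hab hbc hcd hzd

end

-- bool conversion helpers
lemma bn2 {p q : Prop} [Decidable p] [Decidable q] (h : ¬(p ∧ q)) :
    (!(decide p && decide q)) = true := by
  simp only [Bool.not_eq_true', Bool.and_eq_false_iff, decide_eq_false_iff_not]
  tauto

lemma bn3 {p q r : Prop} [Decidable p] [Decidable q] [Decidable r] (h : ¬(p ∧ q ∧ r)) :
    (!(decide p && decide q && decide r)) = true := by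
  simp only [Bool.not_eq_true', Bool.and_eq_false_iff, decide_eq_false_iff_not]
  tauto

lemma bn4 {p q r s : Prop} [Decidable p] [Decidable q] [Decidable r] [Decidable s]
    (h : ¬(p ∧ q ∧ r ∧ s)) :
    (!(decide p && decide q && decide r && decide s)) = true := by
  simp only [Bool.not_eq_true', Bool.and_eq_false_iff, decide_eq_false_iff_not]
  tauto

section Helpers
variable [Fintype V] [DecidableRel G.Adj] [DecidableEq V]

lemma escapeF {Z A : Finset V} (hZ : G.IsZeroForcingSet ↑Z) (h : ∃ v, v ∉ Z ∪ A) :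
    ∃ u w, G.Adj u w ∧ w ∉ Z ∪ A ∧ u ∈ Z ∪ A ∧ ∀ x, G.Adj u x → x ≠ w → x ∈ Z ∪ A := by
  obtain ⟨v, hv⟩ := h
  have hv' : v ∉ (↑Z ∪ ↑A : Set V) := by
    simp only [Set.mem_union, Finset.mem_coe]
    simpa [Finset.mem_union] using hv
  obtain ⟨u, w, h1, h2, h3, h4⟩ := escape (hZ v) hv'
  simp only [Set.mem_union, Finset.mem_coe] at h2 h3 h4
  refine ⟨u, w, h1, by simpa [Finset.mem_union] using h2, by simpa [Finset.mem_union] using h3,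
    fun x hx hne => by simpa [Finset.mem_union] using h4 x hx hne⟩

lemma stage {Z A : Finset V} (hZ : G.IsZeroForcingSet ↑Z) (h : ∃ v, v ∉ Z ∪ A) :
    ∃ u w, G.Adj u w ∧ w ∉ A ∧ (u ∉ A → u ∈ Z) ∧
      insert u (G.neighborFinset u) \ (A ∪ {w}) ⊆ Z := by
  obtain ⟨u, w, hadj, hw, hu, hall⟩ := escapeF hZ h
  rw [Finset.mem_union] at hw hu
  push_neg at hw
  refine ⟨u, w, hadj, hw.2, fun hA => hu.resolve_right hA, ?_⟩
  intro x hx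
  rw [Finset.mem_sdiff, Finset.mem_insert, Finset.mem_union, Finset.mem_singleton,
    mem_neighborFinset] at hx
  push_neg at hx
  obtain ⟨hx1, hx2, hx3⟩ := hx
  rcases hx1 with rfl | hadjx
  · exact hu.resolve_right hx2
  · have := hall x hadjx hx3
    rw [Finset.mem_union] at this
    exact this.resolve_right hx2

lemma cuAdd {s t : Finset V} {a b : ℕ} (hs : s.card ≤ a) (ht : t.card ≤ b) :
    (s ∪ t).card ≤ a + b :=
  le_trans (Finset.card_union_le _ _) (add_le_add hs ht)

lemma cardIf1 {p : Prop} [Decidable p] (v : V) :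
    (if p then ({v} : Finset V) else ∅).card ≤ (decide p).toNat := by
  by_cases h : p <;> simp [h]

lemma cardIf2 {p q : Prop} [Decidable p] [Decidable q] (v : V) :
    (if p ∧ q then ({v} : Finset V) else ∅).card ≤ (decide p && decide q).toNat := by
  by_cases hp : p <;> by_cases hq : q <;> simp [hp, hq]

lemma cardIf2or {p q r : Prop} [Decidable p] [Decidable q] [Decidable r] (v : V) :
    (if p ∧ (q ∨ r) then ({v} : Finset V) else ∅).card ≤
      (decide p && (decide q || decide r)).toNat := by
  by_cases hp : p <;> by_cases hq : q <;> by_cases hr : r <;> simp [hp, hq, hr]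

lemma cardIfOr2 {p q : Prop} [Decidable p] [Decidable q] (v : V) :
    (if p ∨ q then ({v} : Finset V) else ∅).card ≤ (decide p || decide q).toNat := by
  by_cases hp : p <;> by_cases hq : q <;> simp [hp, hq]

lemma cardIfOr3 {p q r : Prop} [Decidable p] [Decidable q] [Decidable r] (v : V) :
    (if p ∨ q ∨ r then ({v} : Finset V) else ∅).card ≤
      (decide p || decide q || decide r).toNat := by
  by_cases hp : p <;> by_cases hq : q <;> by_cases hr : r <;> simp [hp, hq, hr]

lemma cardExt (h5 : 5 ≤ G.egirth) {U : Finset V} {x y : V} (hxy : x ≠ y) :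
    (ext G U x y).card ≤ (decide (ext G U x y).Nonempty).toNat := by
  by_cases h : (ext G U x y).Nonempty
  · have : (decide (ext G U x y).Nonempty).toNat = 1 := by simp [h]
    rw [this]
    exact le_trans (Finset.card_le_card (Finset.sdiff_subset)) (card_common_le_one h5 hxy)
  · simp [Finset.not_nonempty_iff_eq_empty.mp h]

lemma ext_comm {U : Finset V} (x y : V) : ext G U x y = ext G U y x := by
  simp [ext, Finset.inter_comm]

lemma extNE_symm {U : Finset V} {x y : V} (h : (ext G U x y).Nonempty) :
    (ext G U y x).Nonempty := by rwa [ext_comm]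

lemma card_ncl_eq {u : V} : (insert u (G.neighborFinset u)).card = G.degree u + 1 := by
  rw [Finset.card_insert_of_notMem (G.notMem_neighborFinset_self u)]
  rfl

lemma dbound {u w : V} {A : Finset V} (hdeg : ∀ v, (δ' : ℕ) ≤ G.degree v) :
    δ' + 1 ≤ (insert u (G.neighborFinset u) \ (A ∪ {w})).card
      + ((insert u (G.neighborFinset u) ∩ A).card + 1) := by
  have h1 := Finset.card_sdiff_add_card_inter (insert u (G.neighborFinset u)) (A ∪ {w})
  have h2 : (insert u (G.neighborFinset u) ∩ (A ∪ {w})).card ≤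
      (insert u (G.neighborFinset u) ∩ A).card + 1 := by
    rw [Finset.inter_union_distrib_left]
    refine le_trans (Finset.card_union_le _ _) (add_le_add_right ?_ _)
    exact le_trans (Finset.card_le_card Finset.inter_subset_right) (by simp)
  have h3 : δ' + 1 ≤ (insert u (G.neighborFinset u)).card := by
    rw [card_ncl_eq]; exact add_le_add_left (hdeg u) 1
  omega

lemma arith_noesc {δ' n z j c : ℕ} (h2 : 2 ≤ δ') (hM : δ' * δ' + 1 ≤ n) (hj : j ≤ 3)
    (hc : c ≤ 4) (hn : n ≤ z + j) : c * (δ' - 2) + 2 ≤ z := by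
  obtain ⟨d, rfl⟩ : ∃ d, δ' = d + 2 := ⟨δ' - 2, by omega⟩
  have hM' : 4 * d + 5 ≤ n := by nlinarith
  have : c * (d + 2 - 2) ≤ 4 * d := by
    simp only [Nat.add_sub_cancel]
    exact Nat.mul_le_mul_right d hc
  omega

end Helpers

section Core
variable [Fintype V] [DecidableEq V]

lemma core5 (G : SimpleGraph V) [DecidableRel G.Adj] {δ' : ℕ}
    (h5 : 5 ≤ G.egirth) (h2 : 2 ≤ δ') (hdeg : ∀ v, δ' ≤ G.degree v)
    (hM : δ' * δ' + 1 ≤ Fintype.card V) {Z : Finset V} (hZ : G.IsZeroForcingSet ↑Z) :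
    3 * (δ' - 2) + 2 ≤ Z.card := by
  by_cases hesc1 : ∃ v, v ∉ Z ∪ (∅ : Finset V)
  case neg =>
    push_neg at hesc1
    have hn : Fintype.card V ≤ Z.card + 0 := by
      rw [add_zero, ← Finset.card_univ]
      refine Finset.card_le_card (fun v _ => ?_)
      simpa using hesc1 v
    exact arith_noesc h2 hM (by norm_num) (by norm_num) hn
  obtain ⟨u1, w1, hadj1, hwA1, huZ1, hD1⟩ := stage hZ hesc1
  by_cases hesc2 : ∃ v, v ∉ Z ∪ insert u1 (G.neighborFinset u1)
  case neg =>
    push_neg at hesc2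
    have hsub : insert u1 (G.neighborFinset u1) \ Z ⊆ {w1} := by
      intro x hx
      rw [Finset.mem_sdiff] at hx
      rw [Finset.mem_singleton]
      by_contra hxw
      refine hx.2 (hD1 ?_)
      rw [Finset.mem_sdiff]
      refine ⟨hx.1, ?_⟩
      simp [hxw]
    have hn : Fintype.card V ≤ Z.card + 1 := by
      calc Fintype.card V = (Finset.univ : Finset V).card := (Finset.card_univ).symm
        _ ≤ (Z ∪ insert u1 (G.neighborFinset u1)).card :=
            Finset.card_le_card (fun v _ => by simpa using hesc2 v)
        _ = (Z ∪ insert u1 (G.neighborFinset u1) \ Z).card := by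
            rw [Finset.union_sdiff_self_eq_union]
        _ ≤ Z.card + (insert u1 (G.neighborFinset u1) \ Z).card := Finset.card_union_le _ _
        _ ≤ Z.card + 1 := by
            have := Finset.card_le_card hsub
            simp only [Finset.card_singleton] at this
            omega
    exact arith_noesc h2 hM (by norm_num) (by norm_num) hn
  obtain ⟨u2, w2, hadj2, hwA2, huZ2, hD2⟩ := stage hZ hesc2
  have hne12 : u1 ≠ u2 := by
    rintro rfl
    exact hwA2 (by rw [Finset.mem_insert, mem_neighborFinset]; right; exact hadj2)
  by_cases hesc3 : ∃ v, v ∉ Z ∪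
      (insert u1 (G.neighborFinset u1) ∪ insert u2 (G.neighborFinset u2))
  case neg =>
    push_neg at hesc3
    have hsub : (insert u1 (G.neighborFinset u1) ∪ insert u2 (G.neighborFinset u2)) \ Z
        ⊆ {w1, w2} := by
      intro x hx
      rw [Finset.mem_sdiff, Finset.mem_union] at hx
      simp only [Finset.mem_insert, Finset.mem_singleton]
      by_contra hxw
      push_neg at hxw
      rcases hx.1 with h1 | h1
      · refine hx.2 (hD1 ?_)
        rw [Finset.mem_sdiff]
        exact ⟨h1, by simp [hxw.1]⟩
      · by_cases hA1 : x ∈ insert u1 (G.neighborFinset u1)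
        · refine hx.2 (hD1 ?_)
          rw [Finset.mem_sdiff]
          exact ⟨hA1, by simp [hxw.1]⟩
        · refine hx.2 (hD2 ?_)
          rw [Finset.mem_sdiff]
          refine ⟨h1, ?_⟩
          simp only [Finset.mem_union, Finset.mem_singleton]
          push_neg
          exact ⟨hA1, hxw.2⟩
    have hn : Fintype.card V ≤ Z.card + 2 := by
      calc Fintype.card V = (Finset.univ : Finset V).card := (Finset.card_univ).symm
        _ ≤ (Z ∪ (insert u1 (G.neighborFinset u1) ∪ insert u2 (G.neighborFinset u2))).card :=
            Finset.card_le_card (fun v _ => by simpa using hesc3 v)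
        _ = (Z ∪ (insert u1 (G.neighborFinset u1) ∪ insert u2 (G.neighborFinset u2)) \ Z).card := by
            rw [Finset.union_sdiff_self_eq_union]
        _ ≤ Z.card + ((insert u1 (G.neighborFinset u1) ∪ insert u2 (G.neighborFinset u2)) \ Z).card :=
            Finset.card_union_le _ _
        _ ≤ Z.card + 2 := by
            have h := Finset.card_le_card hsub
            have h2' : ({w1, w2} : Finset V).card ≤ 2 :=
              le_trans (Finset.card_insert_le _ _) (by simp)
            omega
    exact arith_noesc h2 hM (by norm_num) (by norm_num) hn
  obtain ⟨u3, w3, hadj3, hwA3, huZ3, hD3⟩ := stage hZ hesc3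
  have hne13 : u1 ≠ u3 := by
    rintro rfl
    exact hwA3 (Finset.mem_union_left _
      (by rw [Finset.mem_insert, mem_neighborFinset]; right; exact hadj3))
  have hne23 : u2 ≠ u3 := by
    rintro rfl
    exact hwA3 (Finset.mem_union_right _
      (by rw [Finset.mem_insert, mem_neighborFinset]; right; exact hadj3))
  have hU1 : u1 ∈ ({u1, u2, u3} : Finset V) := by simp
  have hU2 : u2 ∈ ({u1, u2, u3} : Finset V) := by simp
  have hU3 : u3 ∈ ({u1, u2, u3} : Finset V) := by simp
  have hok : ok3 (decide (G.Adj u1 u2)) (decide (G.Adj u1 u3)) (decide (G.Adj u2 u3))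
      (decide (ext G {u1, u2, u3} u1 u2).Nonempty)
      (decide (ext G {u1, u2, u3} u1 u3).Nonempty)
      (decide (ext G {u1, u2, u3} u2 u3).Nonempty) = true := by
    simp only [ok3, Bool.and_eq_true]
    exact ⟨bn3 (fun ⟨x1, x2, x3⟩ => noT1 h5 x1 x2 x3),
      bn2 (fun ⟨x1, x2⟩ => noT4 h5 x1 x2),
      bn2 (fun ⟨x1, x2⟩ => noT4 h5 x1 x2),
      bn2 (fun ⟨x1, x2⟩ => noT4 h5 x1 x2),
      bn3 (fun ⟨x1, x2, x3⟩ => noT2 h5 hU1 hne23 x1.symm x2 x3),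
      bn3 (fun ⟨x1, x2, x3⟩ => noT2 h5 hU2 hne13 x1 x2 x3),
      bn3 (fun ⟨x1, x2, x3⟩ => noT2 h5 hU3 hne12 x1 x2.symm x3)⟩
  have hkey := key3 _ _ _ _ _ _ hok
  -- bridge for stage 2
  have hB2 : (insert u2 (G.neighborFinset u2) ∩ insert u1 (G.neighborFinset u1)).card ≤
      (decide (G.Adj u1 u2)).toNat + (decide (G.Adj u2 u3) && decide (G.Adj u1 u3)).toNat +
      (decide (ext G {u1, u2, u3} u1 u2).Nonempty).toNat + (decide (G.Adj u1 u2)).toNat := by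
    have hsub : insert u2 (G.neighborFinset u2) ∩ insert u1 (G.neighborFinset u1) ⊆
        (if G.Adj u1 u2 then ({u1} : Finset V) else ∅) ∪
        ((if G.Adj u2 u3 ∧ G.Adj u1 u3 then ({u3} : Finset V) else ∅) ∪
        (ext G {u1, u2, u3} u1 u2 ∪
        (if G.Adj u1 u2 then ({u2} : Finset V) else ∅))) := by
      intro x hx
      rw [Finset.mem_inter, Finset.mem_insert, Finset.mem_insert,
        mem_neighborFinset, mem_neighborFinset] at hx
      obtain ⟨hxN, hxA⟩ := hx
      simp only [Finset.mem_union]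
      rcases hxA with hx1 | hxA1
      · left
        have h : G.Adj u1 u2 := by
          rcases hxN with h' | h'
          · exact absurd (hx1.symm.trans h') hne12
          · rw [← hx1]; exact h'.symm
        rw [if_pos h, Finset.mem_singleton]
        exact hx1
      · rcases hxN with hx2 | hxN2
        · right; right; right
          have h : G.Adj u1 u2 := by rw [← hx2]; exact hxA1
          rw [if_pos h, Finset.mem_singleton]
          exact hx2
        · by_cases hx3 : x = u3
          · right; left
            have h : G.Adj u2 u3 ∧ G.Adj u1 u3 := by rw [← hx3]; exact ⟨hxN2, hxA1⟩
            rw [if_pos h, Finset.mem_singleton]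
            exact hx3
          · right; right; left
            simp only [ext, Finset.mem_sdiff, Finset.mem_inter, mem_neighborFinset]
            refine ⟨⟨hxA1, hxN2⟩, ?_⟩
            simp only [Finset.mem_insert, Finset.mem_singleton]
            push_neg
            exact ⟨hxA1.ne', hxN2.ne', hx3⟩
    refine le_trans (Finset.card_le_card hsub) (le_trans
      (cuAdd (cardIf1 u1) (cuAdd (cardIf2 u3) (cuAdd (cardExt h5 hne12) (cardIf1 u2)))) ?_)
    omega
  -- bridge for stage 3
  have hB3 : (insert u3 (G.neighborFinset u3) ∩
      (insert u1 (G.neighborFinset u1) ∪ insert u2 (G.neighborFinset u2))).card ≤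
      (decide (G.Adj u1 u3)).toNat + (decide (G.Adj u2 u3)).toNat +
      (decide (ext G {u1, u2, u3} u1 u3).Nonempty).toNat +
      (decide (ext G {u1, u2, u3} u2 u3).Nonempty).toNat +
      (decide (G.Adj u1 u3) || decide (G.Adj u2 u3)).toNat := by
    have hsub : insert u3 (G.neighborFinset u3) ∩
        (insert u1 (G.neighborFinset u1) ∪ insert u2 (G.neighborFinset u2)) ⊆
        (if G.Adj u1 u3 then ({u1} : Finset V) else ∅) ∪
        ((if G.Adj u2 u3 then ({u2} : Finset V) else ∅) ∪
        (ext G {u1, u2, u3} u1 u3 ∪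
        (ext G {u1, u2, u3} u2 u3 ∪
        (if G.Adj u1 u3 ∨ G.Adj u2 u3 then ({u3} : Finset V) else ∅)))) := by
      intro x hx
      rw [Finset.mem_inter, Finset.mem_insert, mem_neighborFinset, Finset.mem_union,
        Finset.mem_insert, Finset.mem_insert, mem_neighborFinset, mem_neighborFinset] at hx
      obtain ⟨hxN, hxA⟩ := hx
      simp only [Finset.mem_union]
      rcases hxN with hx3 | hxN3
      · right; right; right; right
        have h : G.Adj u1 u3 ∨ G.Adj u2 u3 := by
          rw [← hx3]
          rcases hxA with (h | h) | (h | h)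
          · exact absurd (hx3.symm.trans h) hne13.symm
          · exact Or.inl h
          · exact absurd (hx3.symm.trans h) hne23.symm
          · exact Or.inr h
        rw [if_pos h, Finset.mem_singleton]
        exact hx3
      · rcases hxA with hA | hA
        · rcases hA with hx1 | hA1
          · left
            have h : G.Adj u1 u3 := by rw [← hx1]; exact hxN3.symm
            rw [if_pos h, Finset.mem_singleton]
            exact hx1
          · by_cases hx2 : x = u2
            · right; left
              have h : G.Adj u2 u3 := by rw [← hx2]; exact hxN3.symm
              rw [if_pos h, Finset.mem_singleton]
              exact hx2
            · right; right; left
              simp only [ext, Finset.mem_sdiff, Finset.mem_inter, mem_neighborFinset]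
              refine ⟨⟨hA1, hxN3⟩, ?_⟩
              simp only [Finset.mem_insert, Finset.mem_singleton]
              push_neg
              exact ⟨hA1.ne', hx2, hxN3.ne'⟩
        · rcases hA with hx2 | hA2
          · right; left
            have h : G.Adj u2 u3 := by rw [← hx2]; exact hxN3.symm
            rw [if_pos h, Finset.mem_singleton]
            exact hx2
          · by_cases hx1 : x = u1
            · left
              have h : G.Adj u1 u3 := by rw [← hx1]; exact hxN3.symm
              rw [if_pos h, Finset.mem_singleton]
              exact hx1
            · right; right; right; left
              simp only [ext, Finset.mem_sdiff, Finset.mem_inter, mem_neighborFinset]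
              refine ⟨⟨hA2, hxN3⟩, ?_⟩
              simp only [Finset.mem_insert, Finset.mem_singleton]
              push_neg
              exact ⟨hx1, hA2.ne', hxN3.ne'⟩
    refine le_trans (Finset.card_le_card hsub) (le_trans
      (cuAdd (cardIf1 u1) (cuAdd (cardIf1 u2) (cuAdd (cardExt h5 hne13)
        (cuAdd (cardExt h5 hne23) (cardIfOr2 u3))))) ?_)
    omega
  -- degree bounds
  have hd1 : δ' + 1 ≤ (insert u1 (G.neighborFinset u1) \ ((∅ : Finset V) ∪ {w1})).card +
      ((insert u1 (G.neighborFinset u1) ∩ (∅ : Finset V)).card + 1) := dbound hdeg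
  have hd2 : δ' + 1 ≤ (insert u2 (G.neighborFinset u2) \
      (insert u1 (G.neighborFinset u1) ∪ {w2})).card +
      ((insert u2 (G.neighborFinset u2) ∩ insert u1 (G.neighborFinset u1)).card + 1) :=
    dbound hdeg
  have hd3 : δ' + 1 ≤ (insert u3 (G.neighborFinset u3) \
      ((insert u1 (G.neighborFinset u1) ∪ insert u2 (G.neighborFinset u2)) ∪ {w3})).card +
      ((insert u3 (G.neighborFinset u3) ∩
        (insert u1 (G.neighborFinset u1) ∪ insert u2 (G.neighborFinset u2))).card + 1) :=
    dbound hdeg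
  have hz1 : (insert u1 (G.neighborFinset u1) ∩ (∅ : Finset V)).card = 0 := by simp
  -- disjoint unions inside Z
  have hcard : (insert u1 (G.neighborFinset u1) \ ((∅ : Finset V) ∪ {w1})).card +
      (insert u2 (G.neighborFinset u2) \ (insert u1 (G.neighborFinset u1) ∪ {w2})).card +
      (insert u3 (G.neighborFinset u3) \
        ((insert u1 (G.neighborFinset u1) ∪ insert u2 (G.neighborFinset u2)) ∪ {w3})).card
      ≤ Z.card := by
    have h12 : Disjoint (insert u1 (G.neighborFinset u1) \ ((∅ : Finset V) ∪ {w1}))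
        (insert u2 (G.neighborFinset u2) \ (insert u1 (G.neighborFinset u1) ∪ {w2})) := by
      rw [Finset.disjoint_left]
      intro x hx1 hx2
      rw [Finset.mem_sdiff] at hx1 hx2
      exact hx2.2 (Finset.mem_union_left _ hx1.1)
    have h123 : Disjoint ((insert u1 (G.neighborFinset u1) \ ((∅ : Finset V) ∪ {w1})) ∪
        (insert u2 (G.neighborFinset u2) \ (insert u1 (G.neighborFinset u1) ∪ {w2})))
        (insert u3 (G.neighborFinset u3) \
          ((insert u1 (G.neighborFinset u1) ∪ insert u2 (G.neighborFinset u2)) ∪ {w3})) := by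
      rw [Finset.disjoint_left]
      intro x hx1 hx2
      rw [Finset.mem_sdiff] at hx2
      rw [Finset.mem_union] at hx1
      refine hx2.2 (Finset.mem_union_left _ ?_)
      rcases hx1 with h | h
      · exact Finset.mem_union_left _ (Finset.mem_sdiff.mp h).1
      · exact Finset.mem_union_right _ (Finset.mem_sdiff.mp h).1
    calc (insert u1 (G.neighborFinset u1) \ ((∅ : Finset V) ∪ {w1})).card +
        (insert u2 (G.neighborFinset u2) \ (insert u1 (G.neighborFinset u1) ∪ {w2})).card +
        (insert u3 (G.neighborFinset u3) \
          ((insert u1 (G.neighborFinset u1) ∪ insert u2 (G.neighborFinset u2)) ∪ {w3})).card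
        = (((insert u1 (G.neighborFinset u1) \ ((∅ : Finset V) ∪ {w1})) ∪
          (insert u2 (G.neighborFinset u2) \ (insert u1 (G.neighborFinset u1) ∪ {w2}))) ∪
          (insert u3 (G.neighborFinset u3) \
            ((insert u1 (G.neighborFinset u1) ∪ insert u2 (G.neighborFinset u2)) ∪ {w3}))).card := by
          rw [Finset.card_union_of_disjoint h123, Finset.card_union_of_disjoint h12]
      _ ≤ Z.card := Finset.card_le_card
          (Finset.union_subset (Finset.union_subset hD1 hD2) hD3)
  have hO : (insert u2 (G.neighborFinset u2) ∩ insert u1 (G.neighborFinset u1)).card +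
      (insert u3 (G.neighborFinset u3) ∩
        (insert u1 (G.neighborFinset u1) ∪ insert u2 (G.neighborFinset u2))).card ≤ 4 := by
    omega
  obtain ⟨d, rfl⟩ : ∃ d, δ' = d + 2 := ⟨δ' - 2, by omega⟩
  simp only [Nat.add_sub_cancel]
  omega

lemma core6 (G : SimpleGraph V) [DecidableRel G.Adj] {δ' : ℕ}
    (h6 : 6 ≤ G.egirth) (h2 : 2 ≤ δ') (hdeg : ∀ v, δ' ≤ G.degree v)
    (hM : δ' * δ' + 1 ≤ Fintype.card V) {Z : Finset V} (hZ : G.IsZeroForcingSet ↑Z) :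
    4 * (δ' - 2) + 2 ≤ Z.card := by
  have h5 : 5 ≤ G.egirth := le_trans (by norm_num) h6
  by_cases hesc1 : ∃ v, v ∉ Z ∪ (∅ : Finset V)
  case neg =>
    push_neg at hesc1
    have hn : Fintype.card V ≤ Z.card + 0 := by
      rw [add_zero, ← Finset.card_univ]
      refine Finset.card_le_card (fun v _ => ?_)
      simpa using hesc1 v
    exact arith_noesc h2 hM (by norm_num) (by norm_num) hn
  obtain ⟨u1, w1, hadj1, hwA1, huZ1, hD1⟩ := stage hZ hesc1
  by_cases hesc2 : ∃ v, v ∉ Z ∪ insert u1 (G.neighborFinset u1)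
  case neg =>
    push_neg at hesc2
    have hsub : insert u1 (G.neighborFinset u1) \ Z ⊆ {w1} := by
      intro x hx
      rw [Finset.mem_sdiff] at hx
      rw [Finset.mem_singleton]
      by_contra hxw
      refine hx.2 (hD1 ?_)
      rw [Finset.mem_sdiff]
      exact ⟨hx.1, by simp [hxw]⟩
    have hn : Fintype.card V ≤ Z.card + 1 := by
      calc Fintype.card V = (Finset.univ : Finset V).card := (Finset.card_univ).symm
        _ ≤ (Z ∪ insert u1 (G.neighborFinset u1)).card := Finset.card_le_card (fun v _ => by simpa using hesc2 v)
        _ = (Z ∪ insert u1 (G.neighborFinset u1) \ Z).card := by rw [Finset.union_sdiff_self_eq_union]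
        _ ≤ Z.card + (insert u1 (G.neighborFinset u1) \ Z).card := Finset.card_union_le _ _
        _ ≤ Z.card + 1 := by
            have := Finset.card_le_card hsub
            simp only [Finset.card_singleton] at this
            omega
    exact arith_noesc h2 hM (by norm_num) (by norm_num) hn
  obtain ⟨u2, w2, hadj2, hwA2, huZ2, hD2⟩ := stage hZ hesc2
  have hne12 : u1 ≠ u2 := by
    rintro rfl
    exact hwA2 (by rw [Finset.mem_insert, mem_neighborFinset]; right; exact hadj2)
  by_cases hesc3 : ∃ v, v ∉ Z ∪ (insert u1 (G.neighborFinset u1) ∪ insert u2 (G.neighborFinset u2))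
  case neg =>
    push_neg at hesc3
    have hsub : (insert u1 (G.neighborFinset u1) ∪ insert u2 (G.neighborFinset u2)) \ Z ⊆ {w1, w2} := by
      intro x hx
      rw [Finset.mem_sdiff] at hx
      simp only [Finset.mem_insert, Finset.mem_singleton]
      by_contra hxw
      push_neg at hxw
      by_cases hN1x : x ∈ insert u1 (G.neighborFinset u1)
      · refine hx.2 (hD1 ?_)
        rw [Finset.mem_sdiff]
        exact ⟨hN1x, by simp [hxw.1]⟩
      · have hN2x : x ∈ insert u2 (G.neighborFinset u2) := by
          rcases Finset.mem_union.mp hx.1 with h | h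
          · exact absurd h hN1x
          · exact h
        refine hx.2 (hD2 ?_)
        rw [Finset.mem_sdiff]
        refine ⟨hN2x, ?_⟩
        simp only [Finset.mem_union, Finset.mem_singleton]
        push_neg
        exact ⟨hN1x, hxw.2⟩
    have hn : Fintype.card V ≤ Z.card + 2 := by
      calc Fintype.card V = (Finset.univ : Finset V).card := (Finset.card_univ).symm
        _ ≤ (Z ∪ (insert u1 (G.neighborFinset u1) ∪ insert u2 (G.neighborFinset u2))).card := Finset.card_le_card (fun v _ => by simpa using hesc3 v)
        _ = (Z ∪ (insert u1 (G.neighborFinset u1) ∪ insert u2 (G.neighborFinset u2)) \ Z).card := by rw [Finset.union_sdiff_self_eq_union]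
        _ ≤ Z.card + ((insert u1 (G.neighborFinset u1) ∪ insert u2 (G.neighborFinset u2)) \ Z).card := Finset.card_union_le _ _
        _ ≤ Z.card + 2 := by
            have h := Finset.card_le_card hsub
            have h2' : ({w1, w2} : Finset V).card ≤ 2 :=
              le_trans (Finset.card_insert_le _ _) (by simp)
            omega
    exact arith_noesc h2 hM (by norm_num) (by norm_num) hn
  obtain ⟨u3, w3, hadj3, hwA3, huZ3, hD3⟩ := stage hZ hesc3
  have hne13 : u1 ≠ u3 := by
    rintro rfl
    exact hwA3 (Finset.mem_union_left _
      (by rw [Finset.mem_insert, mem_neighborFinset]; right; exact hadj3))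
  have hne23 : u2 ≠ u3 := by
    rintro rfl
    exact hwA3 (Finset.mem_union_right _
      (by rw [Finset.mem_insert, mem_neighborFinset]; right; exact hadj3))
  by_cases hesc4 : ∃ v, v ∉ Z ∪ ((insert u1 (G.neighborFinset u1) ∪ insert u2 (G.neighborFinset u2)) ∪ insert u3 (G.neighborFinset u3))
  case neg =>
    push_neg at hesc4
    have hsub : ((insert u1 (G.neighborFinset u1) ∪ insert u2 (G.neighborFinset u2)) ∪ insert u3 (G.neighborFinset u3)) \ Z ⊆ {w1, w2, w3} := by
      intro x hx
      rw [Finset.mem_sdiff] at hx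
      simp only [Finset.mem_insert, Finset.mem_singleton]
      by_contra hxw
      push_neg at hxw
      by_cases hN1x : x ∈ insert u1 (G.neighborFinset u1)
      · refine hx.2 (hD1 ?_)
        rw [Finset.mem_sdiff]
        exact ⟨hN1x, by simp [hxw.1]⟩
      · by_cases hN2x : x ∈ insert u2 (G.neighborFinset u2)
        · refine hx.2 (hD2 ?_)
          rw [Finset.mem_sdiff]
          refine ⟨hN2x, ?_⟩
          simp only [Finset.mem_union, Finset.mem_singleton]
          push_neg
          exact ⟨hN1x, hxw.2.1⟩
        · have hN3x : x ∈ insert u3 (G.neighborFinset u3) := by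
            rcases Finset.mem_union.mp hx.1 with h | h
            · rcases Finset.mem_union.mp h with h' | h'
              · exact absurd h' hN1x
              · exact absurd h' hN2x
            · exact h
          refine hx.2 (hD3 ?_)
          rw [Finset.mem_sdiff]
          refine ⟨hN3x, ?_⟩
          simp only [Finset.mem_union, Finset.mem_singleton]
          push_neg
          exact ⟨⟨hN1x, hN2x⟩, hxw.2.2⟩
    have hn : Fintype.card V ≤ Z.card + 3 := by
      calc Fintype.card V = (Finset.univ : Finset V).card := (Finset.card_univ).symm
        _ ≤ (Z ∪ ((insert u1 (G.neighborFinset u1) ∪ insert u2 (G.neighborFinset u2)) ∪ insert u3 (G.neighborFinset u3))).card := Finset.card_le_card (fun v _ => by simpa using hesc4 v)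
        _ = (Z ∪ ((insert u1 (G.neighborFinset u1) ∪ insert u2 (G.neighborFinset u2)) ∪ insert u3 (G.neighborFinset u3)) \ Z).card := by rw [Finset.union_sdiff_self_eq_union]
        _ ≤ Z.card + (((insert u1 (G.neighborFinset u1) ∪ insert u2 (G.neighborFinset u2)) ∪ insert u3 (G.neighborFinset u3)) \ Z).card := Finset.card_union_le _ _
        _ ≤ Z.card + 3 := by
            have h := Finset.card_le_card hsub
            have h3' : ({w1, w2, w3} : Finset V).card ≤ 3 :=
              Finset.card_le_three
            omega
    exact arith_noesc h2 hM (by norm_num) (by norm_num) hn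
  obtain ⟨u4, w4, hadj4, hwA4, huZ4, hD4⟩ := stage hZ hesc4
  have hne14 : u1 ≠ u4 := by
    rintro rfl
    exact hwA4 (Finset.mem_union_left _ (Finset.mem_union_left _
      (by rw [Finset.mem_insert, mem_neighborFinset]; right; exact hadj4)))
  have hne24 : u2 ≠ u4 := by
    rintro rfl
    exact hwA4 (Finset.mem_union_left _ (Finset.mem_union_right _
      (by rw [Finset.mem_insert, mem_neighborFinset]; right; exact hadj4)))
  have hne34 : u3 ≠ u4 := by
    rintro rfl
    exact hwA4 (Finset.mem_union_right _
      (by rw [Finset.mem_insert, mem_neighborFinset]; right; exact hadj4))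
  have hU1 : u1 ∈ ({u1, u2, u3, u4} : Finset V) := by simp
  have hU2 : u2 ∈ ({u1, u2, u3, u4} : Finset V) := by simp
  have hU3 : u3 ∈ ({u1, u2, u3, u4} : Finset V) := by simp
  have hU4 : u4 ∈ ({u1, u2, u3, u4} : Finset V) := by simp
  have hok : ok4 (decide (G.Adj u1 u2)) (decide (G.Adj u1 u3)) (decide (G.Adj u1 u4))
      (decide (G.Adj u2 u3)) (decide (G.Adj u2 u4)) (decide (G.Adj u3 u4))
      (decide (ext G {u1, u2, u3, u4} u1 u2).Nonempty)
      (decide (ext G {u1, u2, u3, u4} u1 u3).Nonempty)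
      (decide (ext G {u1, u2, u3, u4} u1 u4).Nonempty)
      (decide (ext G {u1, u2, u3, u4} u2 u3).Nonempty)
      (decide (ext G {u1, u2, u3, u4} u2 u4).Nonempty)
      (decide (ext G {u1, u2, u3, u4} u3 u4).Nonempty) = true := by
    simp only [ok4, Bool.and_eq_true]
    exact ⟨bn3 (fun ⟨x1, x2, x3⟩ => noT1 h5 x1 x2 x3),
      bn3 (fun ⟨x1, x2, x3⟩ => noT1 h5 x1 x2 x3),
      bn3 (fun ⟨x1, x2, x3⟩ => noT1 h5 x1 x2 x3),
      bn3 (fun ⟨x1, x2, x3⟩ => noT1 h5 x1 x2 x3),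
      bn2 (fun ⟨x1, x2⟩ => noT4 h5 x1 x2),
      bn2 (fun ⟨x1, x2⟩ => noT4 h5 x1 x2),
      bn2 (fun ⟨x1, x2⟩ => noT4 h5 x1 x2),
      bn2 (fun ⟨x1, x2⟩ => noT4 h5 x1 x2),
      bn2 (fun ⟨x1, x2⟩ => noT4 h5 x1 x2),
      bn2 (fun ⟨x1, x2⟩ => noT4 h5 x1 x2),
      bn3 (fun ⟨x1, x2, x3⟩ => noT2 h5 hU1 hne23 x1.symm x2 x3),
      bn3 (fun ⟨x1, x2, x3⟩ => noT2 h5 hU2 hne13 x1 x2 x3),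
      bn3 (fun ⟨x1, x2, x3⟩ => noT2 h5 hU3 hne12 x1 x2.symm x3),
      bn3 (fun ⟨x1, x2, x3⟩ => noT2 h5 hU1 hne24 x1.symm x2 x3),
      bn3 (fun ⟨x1, x2, x3⟩ => noT2 h5 hU2 hne14 x1 x2 x3),
      bn3 (fun ⟨x1, x2, x3⟩ => noT2 h5 hU4 hne12 x1 x2.symm x3),
      bn3 (fun ⟨x1, x2, x3⟩ => noT2 h5 hU1 hne34 x1.symm x2 x3),
      bn3 (fun ⟨x1, x2, x3⟩ => noT2 h5 hU3 hne14 x1 x2 x3),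
      bn3 (fun ⟨x1, x2, x3⟩ => noT2 h5 hU4 hne13 x1 x2.symm x3),
      bn3 (fun ⟨x1, x2, x3⟩ => noT2 h5 hU2 hne34 x1.symm x2 x3),
      bn3 (fun ⟨x1, x2, x3⟩ => noT2 h5 hU3 hne24 x1 x2 x3),
      bn3 (fun ⟨x1, x2, x3⟩ => noT2 h5 hU4 hne23 x1 x2.symm x3),
      bn3 (fun ⟨x1, x2, x3⟩ => noT3 h6 hU2 hU3 hne12.symm hne13.symm x1 (extNE_symm x2) (extNE_symm x3)),
      bn3 (fun ⟨x1, x2, x3⟩ => noT3 h6 hU1 hU3 hne12 hne23.symm x1 x2 (extNE_symm x3)),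
      bn3 (fun ⟨x1, x2, x3⟩ => noT3 h6 hU1 hU2 hne13 hne23 x1 x2 x3),
      bn3 (fun ⟨x1, x2, x3⟩ => noT3 h6 hU2 hU4 hne12.symm hne14.symm x1 (extNE_symm x2) (extNE_symm x3)),
      bn3 (fun ⟨x1, x2, x3⟩ => noT3 h6 hU1 hU4 hne12 hne24.symm x1 x2 (extNE_symm x3)),
      bn3 (fun ⟨x1, x2, x3⟩ => noT3 h6 hU1 hU2 hne14 hne24 x1 x2 x3),
      bn3 (fun ⟨x1, x2, x3⟩ => noT3 h6 hU3 hU4 hne13.symm hne14.symm x1 (extNE_symm x2) (extNE_symm x3)),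
      bn3 (fun ⟨x1, x2, x3⟩ => noT3 h6 hU1 hU4 hne13 hne34.symm x1 x2 (extNE_symm x3)),
      bn3 (fun ⟨x1, x2, x3⟩ => noT3 h6 hU1 hU3 hne14 hne34 x1 x2 x3),
      bn3 (fun ⟨x1, x2, x3⟩ => noT3 h6 hU3 hU4 hne23.symm hne24.symm x1 (extNE_symm x2) (extNE_symm x3)),
      bn3 (fun ⟨x1, x2, x3⟩ => noT3 h6 hU2 hU4 hne23 hne34.symm x1 x2 (extNE_symm x3)),
      bn3 (fun ⟨x1, x2, x3⟩ => noT3 h6 hU2 hU3 hne24 hne34 x1 x2 x3),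
      bn4 (fun ⟨x1, x2, x3, x4⟩ => noT5 h5 hne12 hne34 x1 x2.symm x3 x4),
      bn4 (fun ⟨x1, x2, x3, x4⟩ => noT5 h5 hne13 hne24 x1 x2 x3 x4),
      bn4 (fun ⟨x1, x2, x3, x4⟩ => noT5 h5 hne14 hne23 x1 x2 x3.symm x4),
      bn4 (fun ⟨x1, x2, x3, x4⟩ => noT6 h6 hU2 hU3 hne13 hne14 hne24 x1 x2 x3 x4),
      bn4 (fun ⟨x1, x2, x3, x4⟩ => noT6 h6 hU2 hU4 hne14 hne13 hne23 x1 x2 x3.symm x4),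
      bn4 (fun ⟨x1, x2, x3, x4⟩ => noT6 h6 hU3 hU2 hne12 hne14 hne34 x1 x2.symm x3 x4),
      bn4 (fun ⟨x1, x2, x3, x4⟩ => noT6 h6 hU3 hU4 hne14 hne12 hne23.symm x1 x2 x3.symm x4),
      bn4 (fun ⟨x1, x2, x3, x4⟩ => noT6 h6 hU4 hU2 hne12 hne13 hne34.symm x1 x2.symm x3 x4),
      bn4 (fun ⟨x1, x2, x3, x4⟩ => noT6 h6 hU4 hU3 hne13 hne12 hne24.symm x1 x2.symm x3.symm x4),
      bn4 (fun ⟨x1, x2, x3, x4⟩ => noT6 h6 hU1 hU3 hne23 hne24 hne14 x1.symm x2 x3 x4),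
      bn4 (fun ⟨x1, x2, x3, x4⟩ => noT6 h6 hU1 hU4 hne24 hne23 hne13 x1.symm x2 x3.symm x4),
      bn4 (fun ⟨x1, x2, x3, x4⟩ => noT6 h6 hU3 hU1 hne12.symm hne24 hne34 x1 x2.symm x3 x4),
      bn4 (fun ⟨x1, x2, x3, x4⟩ => noT6 h6 hU4 hU1 hne12.symm hne23 hne34.symm x1 x2.symm x3 x4),
      bn4 (fun ⟨x1, x2, x3, x4⟩ => noT6 h6 hU1 hU2 hne23.symm hne34 hne14 x1.symm x2 x3 x4),
      bn4 (fun ⟨x1, x2, x3, x4⟩ => noT6 h6 hU2 hU1 hne13.symm hne34 hne24 x1.symm x2.symm x3 x4)⟩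
  have hkey := key4 _ _ _ _ _ _ _ _ _ _ _ _ hok
  have hB2 : (insert u2 (G.neighborFinset u2) ∩ insert u1 (G.neighborFinset u1)).card ≤
      (decide (G.Adj u1 u2)).toNat + (decide (G.Adj u2 u3) && decide (G.Adj u1 u3)).toNat +
      (decide (G.Adj u2 u4) && decide (G.Adj u1 u4)).toNat +
      (decide (ext G {u1, u2, u3, u4} u1 u2).Nonempty).toNat + (decide (G.Adj u1 u2)).toNat := by
    have hsub : insert u2 (G.neighborFinset u2) ∩ insert u1 (G.neighborFinset u1) ⊆
        (if G.Adj u1 u2 then ({u1} : Finset V) else ∅) ∪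
        ((if G.Adj u2 u3 ∧ G.Adj u1 u3 then ({u3} : Finset V) else ∅) ∪
        ((if G.Adj u2 u4 ∧ G.Adj u1 u4 then ({u4} : Finset V) else ∅) ∪
        (ext G {u1, u2, u3, u4} u1 u2 ∪
        (if G.Adj u1 u2 then ({u2} : Finset V) else ∅)))) := by
      intro x hx
      rw [Finset.mem_inter, Finset.mem_insert, Finset.mem_insert,
        mem_neighborFinset, mem_neighborFinset] at hx
      obtain ⟨hxN, hxA⟩ := hx
      simp only [Finset.mem_union]
      rcases hxA with hx1 | hxA1
      · left
        have h : G.Adj u1 u2 := by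
          rcases hxN with h' | h'
          · exact absurd (hx1.symm.trans h') hne12
          · rw [← hx1]; exact h'.symm
        rw [if_pos h, Finset.mem_singleton]
        exact hx1
      · rcases hxN with hx2 | hxN2
        · right; right; right; right
          have h : G.Adj u1 u2 := by rw [← hx2]; exact hxA1
          rw [if_pos h, Finset.mem_singleton]
          exact hx2
        · by_cases hx3 : x = u3
          · right; left
            have h : G.Adj u2 u3 ∧ G.Adj u1 u3 := by rw [← hx3]; exact ⟨hxN2, hxA1⟩
            rw [if_pos h, Finset.mem_singleton]
            exact hx3
          · by_cases hx4 : x = u4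
            · right; right; left
              have h : G.Adj u2 u4 ∧ G.Adj u1 u4 := by rw [← hx4]; exact ⟨hxN2, hxA1⟩
              rw [if_pos h, Finset.mem_singleton]
              exact hx4
            · right; right; right; left
              simp only [ext, Finset.mem_sdiff, Finset.mem_inter, mem_neighborFinset]
              refine ⟨⟨hxA1, hxN2⟩, ?_⟩
              simp only [Finset.mem_insert, Finset.mem_singleton]
              push_neg
              exact ⟨hxA1.ne', hxN2.ne', hx3, hx4⟩
    refine le_trans (Finset.card_le_card hsub) (le_trans
      (cuAdd (cardIf1 u1) (cuAdd (cardIf2 u3) (cuAdd (cardIf2 u4)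
        (cuAdd (cardExt h5 hne12) (cardIf1 u2))))) ?_)
    omega
  have hB3 : (insert u3 (G.neighborFinset u3) ∩ (insert u1 (G.neighborFinset u1) ∪ insert u2 (G.neighborFinset u2))).card ≤
      (decide (G.Adj u1 u3)).toNat + (decide (G.Adj u2 u3)).toNat +
      (decide (G.Adj u3 u4) && (decide (G.Adj u1 u4) || decide (G.Adj u2 u4))).toNat +
      (decide (ext G {u1, u2, u3, u4} u1 u3).Nonempty).toNat +
      (decide (ext G {u1, u2, u3, u4} u2 u3).Nonempty).toNat +
      (decide (G.Adj u1 u3) || decide (G.Adj u2 u3)).toNat := by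
    have hsub : insert u3 (G.neighborFinset u3) ∩ (insert u1 (G.neighborFinset u1) ∪ insert u2 (G.neighborFinset u2)) ⊆
        (if G.Adj u1 u3 then ({u1} : Finset V) else ∅) ∪
        ((if G.Adj u2 u3 then ({u2} : Finset V) else ∅) ∪
        ((if G.Adj u3 u4 ∧ (G.Adj u1 u4 ∨ G.Adj u2 u4) then ({u4} : Finset V) else ∅) ∪
        (ext G {u1, u2, u3, u4} u1 u3 ∪
        (ext G {u1, u2, u3, u4} u2 u3 ∪
        (if G.Adj u1 u3 ∨ G.Adj u2 u3 then ({u3} : Finset V) else ∅))))) := by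
      intro x hx
      rw [Finset.mem_inter, Finset.mem_insert, mem_neighborFinset, Finset.mem_union,
        Finset.mem_insert, Finset.mem_insert, mem_neighborFinset, mem_neighborFinset] at hx
      obtain ⟨hxN, hxA⟩ := hx
      simp only [Finset.mem_union]
      rcases hxN with hx3 | hxN3
      · right; right; right; right; right
        have h : G.Adj u1 u3 ∨ G.Adj u2 u3 := by
          rw [← hx3]
          rcases hxA with (h | h) | (h | h)
          · exact absurd (hx3.symm.trans h) hne13.symm
          · exact Or.inl h
          · exact absurd (hx3.symm.trans h) hne23.symm
          · exact Or.inr h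
        rw [if_pos h, Finset.mem_singleton]
        exact hx3
      · rcases hxA with hA | hA
        · rcases hA with hx1 | hA1
          · left
            have h : G.Adj u1 u3 := by rw [← hx1]; exact hxN3.symm
            rw [if_pos h, Finset.mem_singleton]
            exact hx1
          · by_cases hx2 : x = u2
            · right; left
              have h : G.Adj u2 u3 := by rw [← hx2]; exact hxN3.symm
              rw [if_pos h, Finset.mem_singleton]
              exact hx2
            · by_cases hx4 : x = u4
              · right; right; left
                have h : G.Adj u3 u4 ∧ (G.Adj u1 u4 ∨ G.Adj u2 u4) := by
                  rw [← hx4]; exact ⟨hxN3, Or.inl hA1⟩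
                rw [if_pos h, Finset.mem_singleton]
                exact hx4
              · right; right; right; left
                simp only [ext, Finset.mem_sdiff, Finset.mem_inter, mem_neighborFinset]
                refine ⟨⟨hA1, hxN3⟩, ?_⟩
                simp only [Finset.mem_insert, Finset.mem_singleton]
                push_neg
                exact ⟨hA1.ne', hx2, hxN3.ne', hx4⟩
        · rcases hA with hx2 | hA2
          · right; left
            have h : G.Adj u2 u3 := by rw [← hx2]; exact hxN3.symm
            rw [if_pos h, Finset.mem_singleton]
            exact hx2
          · by_cases hx1 : x = u1
            · left
              have h : G.Adj u1 u3 := by rw [← hx1]; exact hxN3.symm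
              rw [if_pos h, Finset.mem_singleton]
              exact hx1
            · by_cases hx4 : x = u4
              · right; right; left
                have h : G.Adj u3 u4 ∧ (G.Adj u1 u4 ∨ G.Adj u2 u4) := by
                  rw [← hx4]; exact ⟨hxN3, Or.inr hA2⟩
                rw [if_pos h, Finset.mem_singleton]
                exact hx4
              · right; right; right; right; left
                simp only [ext, Finset.mem_sdiff, Finset.mem_inter, mem_neighborFinset]
                refine ⟨⟨hA2, hxN3⟩, ?_⟩
                simp only [Finset.mem_insert, Finset.mem_singleton]
                push_neg
                exact ⟨hx1, hA2.ne', hxN3.ne', hx4⟩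
    refine le_trans (Finset.card_le_card hsub) (le_trans
      (cuAdd (cardIf1 u1) (cuAdd (cardIf1 u2) (cuAdd (cardIf2or u4)
        (cuAdd (cardExt h5 hne13) (cuAdd (cardExt h5 hne23) (cardIfOr2 u3)))))) ?_)
    omega
  have hB4 : (insert u4 (G.neighborFinset u4) ∩ ((insert u1 (G.neighborFinset u1) ∪ insert u2 (G.neighborFinset u2)) ∪ insert u3 (G.neighborFinset u3))).card ≤
      (decide (G.Adj u1 u4)).toNat + (decide (G.Adj u2 u4)).toNat +
      (decide (G.Adj u3 u4)).toNat +
      (decide (ext G {u1, u2, u3, u4} u1 u4).Nonempty).toNat +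
      (decide (ext G {u1, u2, u3, u4} u2 u4).Nonempty).toNat +
      (decide (ext G {u1, u2, u3, u4} u3 u4).Nonempty).toNat +
      (decide (G.Adj u1 u4) || decide (G.Adj u2 u4) || decide (G.Adj u3 u4)).toNat := by
    have hsub : insert u4 (G.neighborFinset u4) ∩ ((insert u1 (G.neighborFinset u1) ∪ insert u2 (G.neighborFinset u2)) ∪ insert u3 (G.neighborFinset u3)) ⊆
        (if G.Adj u1 u4 then ({u1} : Finset V) else ∅) ∪
        ((if G.Adj u2 u4 then ({u2} : Finset V) else ∅) ∪
        ((if G.Adj u3 u4 then ({u3} : Finset V) else ∅) ∪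
        (ext G {u1, u2, u3, u4} u1 u4 ∪
        (ext G {u1, u2, u3, u4} u2 u4 ∪
        (ext G {u1, u2, u3, u4} u3 u4 ∪
        (if G.Adj u1 u4 ∨ G.Adj u2 u4 ∨ G.Adj u3 u4 then ({u4} : Finset V) else ∅)))))) := by
      intro x hx
      rw [Finset.mem_inter, Finset.mem_insert, mem_neighborFinset, Finset.mem_union,
        Finset.mem_union, Finset.mem_insert, Finset.mem_insert, Finset.mem_insert,
        mem_neighborFinset, mem_neighborFinset, mem_neighborFinset] at hx
      obtain ⟨hxN, hxA⟩ := hx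
      simp only [Finset.mem_union]
      rcases hxN with hx4 | hxN4
      · right; right; right; right; right; right
        have h : G.Adj u1 u4 ∨ G.Adj u2 u4 ∨ G.Adj u3 u4 := by
          rw [← hx4]
          rcases hxA with ((h | h) | (h | h)) | (h | h)
          · exact absurd (hx4.symm.trans h) hne14.symm
          · exact Or.inl h
          · exact absurd (hx4.symm.trans h) hne24.symm
          · exact Or.inr (Or.inl h)
          · exact absurd (hx4.symm.trans h) hne34.symm
          · exact Or.inr (Or.inr h)
        rw [if_pos h, Finset.mem_singleton]
        exact hx4
      · rcases hxA with (hA | hA) | hA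
        · rcases hA with hx1 | hA1
          · left
            have h : G.Adj u1 u4 := by rw [← hx1]; exact hxN4.symm
            rw [if_pos h, Finset.mem_singleton]
            exact hx1
          · by_cases hx2 : x = u2
            · right; left
              have h : G.Adj u2 u4 := by rw [← hx2]; exact hxN4.symm
              rw [if_pos h, Finset.mem_singleton]
              exact hx2
            · by_cases hx3 : x = u3
              · right; right; left
                have h : G.Adj u3 u4 := by rw [← hx3]; exact hxN4.symm
                rw [if_pos h, Finset.mem_singleton]
                exact hx3
              · right; right; right; left
                simp only [ext, Finset.mem_sdiff, Finset.mem_inter, mem_neighborFinset]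
                refine ⟨⟨hA1, hxN4⟩, ?_⟩
                simp only [Finset.mem_insert, Finset.mem_singleton]
                push_neg
                exact ⟨hA1.ne', hx2, hx3, hxN4.ne'⟩
        · rcases hA with hx2 | hA2
          · right; left
            have h : G.Adj u2 u4 := by rw [← hx2]; exact hxN4.symm
            rw [if_pos h, Finset.mem_singleton]
            exact hx2
          · by_cases hx1 : x = u1
            · left
              have h : G.Adj u1 u4 := by rw [← hx1]; exact hxN4.symm
              rw [if_pos h, Finset.mem_singleton]
              exact hx1
            · by_cases hx3 : x = u3
              · right; right; left
                have h : G.Adj u3 u4 := by rw [← hx3]; exact hxN4.symm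
                rw [if_pos h, Finset.mem_singleton]
                exact hx3
              · right; right; right; right; left
                simp only [ext, Finset.mem_sdiff, Finset.mem_inter, mem_neighborFinset]
                refine ⟨⟨hA2, hxN4⟩, ?_⟩
                simp only [Finset.mem_insert, Finset.mem_singleton]
                push_neg
                exact ⟨hx1, hA2.ne', hx3, hxN4.ne'⟩
        · rcases hA with hx3 | hA3
          · right; right; left
            have h : G.Adj u3 u4 := by rw [← hx3]; exact hxN4.symm
            rw [if_pos h, Finset.mem_singleton]
            exact hx3
          · by_cases hx1 : x = u1
            · left
              have h : G.Adj u1 u4 := by rw [← hx1]; exact hxN4.symm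
              rw [if_pos h, Finset.mem_singleton]
              exact hx1
            · by_cases hx2 : x = u2
              · right; left
                have h : G.Adj u2 u4 := by rw [← hx2]; exact hxN4.symm
                rw [if_pos h, Finset.mem_singleton]
                exact hx2
              · right; right; right; right; right; left
                simp only [ext, Finset.mem_sdiff, Finset.mem_inter, mem_neighborFinset]
                refine ⟨⟨hA3, hxN4⟩, ?_⟩
                simp only [Finset.mem_insert, Finset.mem_singleton]
                push_neg
                exact ⟨hx1, hx2, hA3.ne', hxN4.ne'⟩
    refine le_trans (Finset.card_le_card hsub) (le_trans
      (cuAdd (cardIf1 u1) (cuAdd (cardIf1 u2) (cuAdd (cardIf1 u3)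
        (cuAdd (cardExt h5 hne14) (cuAdd (cardExt h5 hne24)
          (cuAdd (cardExt h5 hne34) (cardIfOr3 u4))))))) ?_)
    omega
  have hd1 : δ' + 1 ≤ (insert u1 (G.neighborFinset u1) \ ((∅ : Finset V) ∪ {w1})).card +
      ((insert u1 (G.neighborFinset u1) ∩ (∅ : Finset V)).card + 1) := dbound hdeg
  have hd2 : δ' + 1 ≤ (insert u2 (G.neighborFinset u2) \ (insert u1 (G.neighborFinset u1) ∪ {w2})).card + ((insert u2 (G.neighborFinset u2) ∩ insert u1 (G.neighborFinset u1)).card + 1) := dbound hdeg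
  have hd3 : δ' + 1 ≤ (insert u3 (G.neighborFinset u3) \ ((insert u1 (G.neighborFinset u1) ∪ insert u2 (G.neighborFinset u2)) ∪ {w3})).card + ((insert u3 (G.neighborFinset u3) ∩ (insert u1 (G.neighborFinset u1) ∪ insert u2 (G.neighborFinset u2))).card + 1) := dbound hdeg
  have hd4 : δ' + 1 ≤ (insert u4 (G.neighborFinset u4) \ (((insert u1 (G.neighborFinset u1) ∪ insert u2 (G.neighborFinset u2)) ∪ insert u3 (G.neighborFinset u3)) ∪ {w4})).card + ((insert u4 (G.neighborFinset u4) ∩ ((insert u1 (G.neighborFinset u1) ∪ insert u2 (G.neighborFinset u2)) ∪ insert u3 (G.neighborFinset u3))).card + 1) := dbound hdeg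
  have hz1 : (insert u1 (G.neighborFinset u1) ∩ (∅ : Finset V)).card = 0 := by simp
  have hcard : (insert u1 (G.neighborFinset u1) \ ((∅ : Finset V) ∪ {w1})).card + (insert u2 (G.neighborFinset u2) \ (insert u1 (G.neighborFinset u1) ∪ {w2})).card +
      (insert u3 (G.neighborFinset u3) \ ((insert u1 (G.neighborFinset u1) ∪ insert u2 (G.neighborFinset u2)) ∪ {w3})).card + (insert u4 (G.neighborFinset u4) \ (((insert u1 (G.neighborFinset u1) ∪ insert u2 (G.neighborFinset u2)) ∪ insert u3 (G.neighborFinset u3)) ∪ {w4})).card ≤ Z.card := by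
    have h12 : Disjoint (insert u1 (G.neighborFinset u1) \ ((∅ : Finset V) ∪ {w1})) (insert u2 (G.neighborFinset u2) \ (insert u1 (G.neighborFinset u1) ∪ {w2})) := by
      rw [Finset.disjoint_left]
      intro x hx1 hx2
      rw [Finset.mem_sdiff] at hx1 hx2
      exact hx2.2 (Finset.mem_union_left _ hx1.1)
    have h123 : Disjoint ((insert u1 (G.neighborFinset u1) \ ((∅ : Finset V) ∪ {w1})) ∪ (insert u2 (G.neighborFinset u2) \ (insert u1 (G.neighborFinset u1) ∪ {w2})))
        (insert u3 (G.neighborFinset u3) \ ((insert u1 (G.neighborFinset u1) ∪ insert u2 (G.neighborFinset u2)) ∪ {w3})) := by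
      rw [Finset.disjoint_left]
      intro x hx1 hx2
      rw [Finset.mem_sdiff] at hx2
      rw [Finset.mem_union] at hx1
      refine hx2.2 (Finset.mem_union_left _ ?_)
      rcases hx1 with h | h
      · exact Finset.mem_union_left _ (Finset.mem_sdiff.mp h).1
      · exact Finset.mem_union_right _ (Finset.mem_sdiff.mp h).1
    have h1234 : Disjoint (((insert u1 (G.neighborFinset u1) \ ((∅ : Finset V) ∪ {w1})) ∪ (insert u2 (G.neighborFinset u2) \ (insert u1 (G.neighborFinset u1) ∪ {w2}))) ∪
        (insert u3 (G.neighborFinset u3) \ ((insert u1 (G.neighborFinset u1) ∪ insert u2 (G.neighborFinset u2)) ∪ {w3}))) (insert u4 (G.neighborFinset u4) \ (((insert u1 (G.neighborFinset u1) ∪ insert u2 (G.neighborFinset u2)) ∪ insert u3 (G.neighborFinset u3)) ∪ {w4})) := by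
      rw [Finset.disjoint_left]
      intro x hx1 hx2
      rw [Finset.mem_sdiff] at hx2
      rw [Finset.mem_union] at hx1
      refine hx2.2 (Finset.mem_union_left _ ?_)
      rcases hx1 with h | h
      · rw [Finset.mem_union] at h
        refine Finset.mem_union_left _ ?_
        rcases h with h' | h'
        · exact Finset.mem_union_left _ (Finset.mem_sdiff.mp h').1
        · exact Finset.mem_union_right _ (Finset.mem_sdiff.mp h').1
      · exact Finset.mem_union_right _ (Finset.mem_sdiff.mp h).1
    calc (insert u1 (G.neighborFinset u1) \ ((∅ : Finset V) ∪ {w1})).card + (insert u2 (G.neighborFinset u2) \ (insert u1 (G.neighborFinset u1) ∪ {w2})).card +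
        (insert u3 (G.neighborFinset u3) \ ((insert u1 (G.neighborFinset u1) ∪ insert u2 (G.neighborFinset u2)) ∪ {w3})).card + (insert u4 (G.neighborFinset u4) \ (((insert u1 (G.neighborFinset u1) ∪ insert u2 (G.neighborFinset u2)) ∪ insert u3 (G.neighborFinset u3)) ∪ {w4})).card
        = ((((insert u1 (G.neighborFinset u1) \ ((∅ : Finset V) ∪ {w1})) ∪ (insert u2 (G.neighborFinset u2) \ (insert u1 (G.neighborFinset u1) ∪ {w2}))) ∪
          (insert u3 (G.neighborFinset u3) \ ((insert u1 (G.neighborFinset u1) ∪ insert u2 (G.neighborFinset u2)) ∪ {w3}))) ∪ (insert u4 (G.neighborFinset u4) \ (((insert u1 (G.neighborFinset u1) ∪ insert u2 (G.neighborFinset u2)) ∪ insert u3 (G.neighborFinset u3)) ∪ {w4}))).card := by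
          rw [Finset.card_union_of_disjoint h1234, Finset.card_union_of_disjoint h123,
            Finset.card_union_of_disjoint h12]
      _ ≤ Z.card := Finset.card_le_card
          (Finset.union_subset (Finset.union_subset (Finset.union_subset hD1 hD2) hD3) hD4)
  have hO : (insert u2 (G.neighborFinset u2) ∩ insert u1 (G.neighborFinset u1)).card + (insert u3 (G.neighborFinset u3) ∩ (insert u1 (G.neighborFinset u1) ∪ insert u2 (G.neighborFinset u2))).card + (insert u4 (G.neighborFinset u4) ∩ ((insert u1 (G.neighborFinset u1) ∪ insert u2 (G.neighborFinset u2)) ∪ insert u3 (G.neighborFinset u3))).card ≤ 6 := by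
    omega
  obtain ⟨d, rfl⟩ : ∃ d, δ' = d + 2 := ⟨δ' - 2, by omega⟩
  simp only [Nat.add_sub_cancel]
  omega

end Core

end ZFAux

theorem stmt12 {V : Type*} [Fintype V] (G : SimpleGraph V) [DecidableRel G.Adj] (g δ : ℕ)
    (hg : G.egirth = (g : ℕ∞)) (hgm : g = 5 ∨ g = 6) (hδ : G.minDegree = δ) (h2 : 2 ≤ δ) :
    (g - 2) * (δ - 2) + 2 ≤ G.zeroForcingNumber := by
  classical
  have hdeg : ∀ v, δ ≤ G.degree v := fun v => hδ ▸ G.minDegree_le_degree v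
  have h5 : 5 ≤ G.egirth := by
    rw [hg]
    rcases hgm with rfl | rfl <;> norm_num
  have hac : ¬ G.IsAcyclic := by
    intro h
    rw [← SimpleGraph.egirth_eq_top] at h
    rw [h] at hg
    exact (ENat.coe_ne_top g) hg.symm
  obtain ⟨a, w, hw, -⟩ := (SimpleGraph.exists_egirth_eq_length (G := G)).mpr hac
  have hne : Nonempty V := ⟨a⟩
  have hM : δ * δ + 1 ≤ Fintype.card V := ZFAux.moore h5 hdeg a
  rw [SimpleGraph.zeroForcingNumber]
  refine le_csInf ⟨Fintype.card V, Finset.univ, by simp,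
    fun v => SimpleGraph.ZeroForces.base (by simp)⟩ ?_
  rintro k ⟨Z, rfl, hZ⟩
  rcases hgm with rfl | rfl
  · have := ZFAux.core5 G h5 h2 hdeg hM hZ
    norm_num at this ⊢
    omega
  · have h6 : 6 ≤ G.egirth := by rw [hg]; norm_num
    have := ZFAux.core6 G h6 h2 hdeg hM hZ
    norm_num at this ⊢
    omega
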